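/- arXiv:2012.05664 — 4 statements merged into one kernel-verified Lean document; each statement's English description precedes it below -/
import Mathlib

section
/- Let n ≥ 2, q ∈ ℂ with 0 < |q| < 1 and t ∈ ℂ*, and for λ ∈ ℤ^n define the polynomial d_λ(u) = ∏_{j=1}^n (1 − u t^{n−j} q^{λ_j}) ∈ ℂ[u]. Then the polynomials d_λ(u) separate ℤ^n (i.e., d_λ(u) ≠ d_μ(u) as polynomials in u for every distinct pair λ, μ ∈ ℤ^n) if and only if t^k ∉ q^ℤ for k = 1,…,n−1. -/
open scoped BigOperators Classical
open MeasureTheory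

noncomputable section

/-- The infinite `p`-Pochhammer symbol `(z;p)_∞ = ∏_{i≥0} (1 - p^i z)`. -/
def qPochInf (z p : ℂ) : ℂ := ∏' i : ℕ, (1 - p ^ i * z)

/-- The finite `q`-Pochhammer symbol `(a;q)_k`. -/
def qPochFin (a q : ℂ) (k : ℕ) : ℂ := ∏ i ∈ Finset.range k, (1 - q ^ i * a)

/-- The theta function `θ(z;p) = (z;p)_∞ (p/z;p)_∞`. -/
def thetaF (z p : ℂ) : ℂ := qPochInf z p * qPochInf (p / z) p

/-- The double Pochhammer symbol `(z;p,q)_∞`. -/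
def qPochInf2 (z p q : ℂ) : ℂ := ∏' ij : ℕ × ℕ, (1 - p ^ ij.1 * q ^ ij.2 * z)

/-- The Ruijsenaars elliptic gamma function `Γ(z;p,q)`. -/
def ellGamma (z p q : ℂ) : ℂ := qPochInf2 (p * q / z) p q / qPochInf2 z p q

/-- `q`-shift of the variables in positions `I`. -/
def qShift {n : ℕ} (q : ℂ) (I : Finset (Fin n)) (x : Fin n → ℂ) : Fin n → ℂ :=
  fun i => if i ∈ I then q * x i else x i

/-- The elliptic Ruijsenaars `q`-difference operator of order `r`, applied to a function. -/
def ellD {n : ℕ} (p q t : ℂ) (r : ℕ) (f : (Fin n → ℂ) → ℂ) (x : Fin n → ℂ) : ℂ :=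
  t ^ r.choose 2 * ∑ I ∈ Finset.powersetCard r Finset.univ,
    (∏ i ∈ I, ∏ j ∈ Iᶜ, thetaF (t * x i / x j) p / thetaF (x i / x j) p) * f (qShift q I x)

/-- Generating series `D_x(p;u) = Σ_{r=0}^n (-u)^r D^{(r)}_x(p)`. -/
def ellDgen {n : ℕ} (p q t u : ℂ) (f : (Fin n → ℂ) → ℂ) (x : Fin n → ℂ) : ℂ :=
  ∑ r ∈ Finset.range (n + 1), (-u) ^ r * ellD p q t r f x

/-- The coefficient `B_I(x;p)` of the modified elliptic Ruijsenaars operators. -/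
def Bcoef {n : ℕ} (p t : ℂ) (I : Finset (Fin n)) (x : Fin n → ℂ) : ℂ :=
  (∏ i ∈ I, ∏ j ∈ Iᶜ, if i < j then thetaF (x j / (t * x i)) p / thetaF (x j / x i) p else 1) *
    (∏ j ∈ I, ∏ i ∈ Iᶜ, if i < j then thetaF (t * x j / x i) p / thetaF (x j / x i) p else 1)

/-- The modified elliptic Ruijsenaars operator `E^{(r)}_{x,s}(p)`, applied to a function. -/
def modE {n : ℕ} (p q t : ℂ) (s : Fin n → ℂ) (r : ℕ) (f : (Fin n → ℂ) → ℂ)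
    (x : Fin n → ℂ) : ℂ :=
  ∑ I ∈ Finset.powersetCard r Finset.univ,
    (∏ i ∈ I, s i) * Bcoef p t I x * f (qShift q I x)

/-- The elementary symmetric polynomial `e_r(s)`. -/
def esymF {n : ℕ} (s : Fin n → ℂ) (r : ℕ) : ℂ :=
  ∑ I ∈ Finset.powersetCard r Finset.univ, ∏ i ∈ I, s i

/-- Laurent polynomials in `n` variables, as finitely supported coefficient functions. -/
abbrev LPoly (n : ℕ) := (Fin n → ℤ) →₀ ℂ

/-- Evaluation of a Laurent polynomial at a point of `(ℂ*)^n`. -/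
def evalL {n : ℕ} (f : LPoly n) (x : Fin n → ℂ) : ℂ :=
  ∑ μ ∈ f.support, f μ * ∏ i, x i ^ μ i

/-- Symmetric Laurent polynomials. -/
def SymmL {n : ℕ} (f : LPoly n) : Prop :=
  ∀ σ : Equiv.Perm (Fin n), ∀ μ : Fin n → ℤ, f (μ ∘ σ) = f μ

/-- The permutation action on Laurent polynomials. -/
def permL {n : ℕ} (σ : Equiv.Perm (Fin n)) (f : LPoly n) : LPoly n :=
  Finsupp.equivMapDomain (Equiv.arrowCongr σ (Equiv.refl ℤ)) f

/-- Dominant vectors `λ_1 ≥ λ_2 ≥ ⋯ ≥ λ_n`. -/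
def DomVec {n : ℕ} (μ : Fin n → ℤ) : Prop := ∀ i j : Fin n, i ≤ j → μ j ≤ μ i

/-- The dominance order on `ℤ^n`. -/
def domLE {n : ℕ} (μ ν : Fin n → ℤ) : Prop :=
  (∑ i, μ i = ∑ i, ν i) ∧
    ∀ k : Fin n, ∑ i ∈ Finset.univ.filter (fun i => i ≤ k), μ i ≤
      ∑ i ∈ Finset.univ.filter (fun i => i ≤ k), ν i

/-- Membership in `ℂ[x^{±1}]^{S_n}_{≤ λ}`: the span of the monomial symmetric
functions `m_μ` over dominant `μ ≤ λ`. -/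
def InBelow {n : ℕ} (f : LPoly n) (lam : Fin n → ℤ) : Prop :=
  SymmL f ∧ ∀ ν ∈ f.support, ∃ μ : Fin n → ℤ,
    DomVec μ ∧ (∃ σ : Equiv.Perm (Fin n), ν = μ ∘ σ) ∧ domLE μ lam

/-- The spectral vector `t^ρ q^λ = (t^{n-1} q^{λ_1}, …, q^{λ_n})`. -/
def specVec {n : ℕ} (q t : ℂ) (lam : Fin n → ℤ) : Fin n → ℂ :=
  fun i => t ^ (n - 1 - (i : ℕ)) * q ^ lam i

/-- Characterization of the Macdonald Laurent polynomial attached to a dominant vector. -/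
def IsMacdonald {n : ℕ} (q t : ℂ) (lam : Fin n → ℤ) (P : LPoly n) : Prop :=
  InBelow P lam ∧ P lam = 1 ∧
    ∀ r ∈ Finset.Icc 1 n, ∀ x : Fin n → ℂ, (∀ i, x i ≠ 0) →
      (∀ i j : Fin n, i ≠ j → x i ≠ x j) →
      ellD 0 q t r (evalL P) x = esymF (specVec q t lam) r * evalL P x

/-- Domain of validity of the `p`-expansion of the elliptic Ruijsenaars operators:
`|p|^{1/(n-1)} < |x_{i+1}/x_i| < 1` (here in `n+1` variables). -/
def ExpDomain {n : ℕ} (p : ℂ) (x : Fin (n + 1) → ℂ) : Prop :=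
  (∀ i, x i ≠ 0) ∧ ∀ i : Fin n,
    ‖p‖ < ‖x i.succ / x i.castSucc‖ ^ n ∧
      ‖x i.succ / x i.castSucc‖ < 1

/-- The vector `φ = (1,0,…,0,-1)`. -/
def phiVec (n : ℕ) : Fin (n + 1) → ℤ :=
  fun i => (if i = 0 then 1 else 0) - (if i = Fin.last n then 1 else 0)

/-- The exponent vector of `x^{-δ} = p`, i.e. `(1,1,…,1)`. -/
def oneF (n : ℕ) : Fin (n + 1) →₀ ℕ := Finsupp.equivFunOnFinite.symm 1

/-- The pairing `⟨ε_j, ν⟩` for `ν ∈ Q^af_+` (cyclic convention). -/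
def pairEpsF {n : ℕ} (ν : Fin (n + 1) → ℕ) (j : Fin (n + 1)) : ℤ :=
  (ν (j + 1) : ℤ) - (ν j : ℤ)

/-- The quantity `d(ν) = Σ_j max(⟨ε_j,ν⟩,0)`. -/
def dIndF {n : ℕ} (ν : Fin (n + 1) → ℕ) : ℕ := ∑ j, (pairEpsF ν j).toNat

/-- The coordinates `z_0 = p x_1/x_n`, `z_k = x_{k+1}/x_k`. -/
def zOf (n : ℕ) (p : ℂ) (x : Fin (n + 1) → ℂ) : Fin (n + 1) → ℂ :=
  fun k => if k = 0 then p * x 0 / x (Fin.last n) else x k / x (k - 1)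

/-- The ratio `x_j/x_i` (for `i < j`) expressed in the `z` coordinates. -/
def ratZ {n : ℕ} (z : Fin (n + 1) → ℂ) (i j : Fin (n + 1)) : ℂ :=
  ∏ k ∈ Finset.Ioc i j, z k

/-- The coefficient `B_I` written as a function of the `z` coordinates
(with `p = z_0 z_1 ⋯ z_{n-1}`). -/
def BcoefZ {n : ℕ} (t : ℂ) (I : Finset (Fin (n + 1))) (z : Fin (n + 1) → ℂ) : ℂ :=
  (∏ i ∈ I, ∏ j ∈ Iᶜ, if i < j then
      thetaF (ratZ z i j / t) (∏ k, z k) / thetaF (ratZ z i j) (∏ k, z k) else 1) *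
    (∏ j ∈ I, ∏ i ∈ Iᶜ, if i < j then
      thetaF (t * ratZ z i j) (∏ k, z k) / thetaF (ratZ z i j) (∏ k, z k) else 1)

/-- The symbol `b_β(q^{-ν})` of the modified elliptic Ruijsenaars operator of order `r`. -/
def bEval {n : ℕ} (q : ℂ) (s : Fin (n + 1) → ℂ)
    (b : Finset (Fin (n + 1)) → ((Fin (n + 1) →₀ ℕ) → ℂ)) (r : ℕ)
    (β ν : Fin (n + 1) →₀ ℕ) : ℂ :=
  ∑ I ∈ Finset.powersetCard r Finset.univ,
    b I β * ∏ i ∈ I, s i * q ^ (-pairEpsF (⇑ν) i)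

/-- The formal joint eigenvalue equations, coefficientwise in
`ℂ[[p x_1/x_n, x_2/x_1, …, x_n/x_{n-1}]]`. -/
def FormalEigen {n : ℕ} (q : ℂ) (s : Fin (n + 1) → ℂ)
    (b : Finset (Fin (n + 1)) → ((Fin (n + 1) →₀ ℕ) → ℂ))
    (f : (Fin (n + 1) →₀ ℕ) → ℂ) (ε : ℕ → ℕ → ℂ) : Prop :=
  ∀ r ∈ Finset.Icc 1 (n + 1), ∀ μ : Fin (n + 1) →₀ ℕ,
    ∑ bv ∈ Finset.HasAntidiagonal.antidiagonal μ, bEval q s b r bv.1 bv.2 * f bv.2 =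
      ∑ k ∈ Finset.range (μ 0 + 1),
        if k • oneF n ≤ μ then ε r k * f (μ - k • oneF n) else 0

/-- Contour integral over the `n`-cycle `{|y_i| = rad i}`, against the
normalized measure `dω_n(y)`. -/
def cycleIntegral {n : ℕ} (rad : Fin n → ℝ) (g : (Fin n → ℂ) → ℂ) : ℂ :=
  ∫ θ in (Set.univ.pi fun _ : Fin n => Set.Icc (0 : ℝ) 1),
    g fun i => (rad i : ℂ) * Complex.exp (2 * Real.pi * Complex.I * (θ i : ℂ))

/-- Normalized integral over the unit torus `𝕋^n`. -/
def torusInt (n : ℕ) (g : (Fin n → ℂ) → ℂ) : ℂ := cycleIntegral (fun _ => 1) g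

/-- The symmetric weight function `w^sym(x;p)`. -/
def wsymF {n : ℕ} (p q t : ℂ) (x : Fin n → ℂ) : ℂ :=
  ∏ i, ∏ j, if i < j then
    ellGamma (t * x i / x j) p q * ellGamma (t * x j / x i) p q /
      (ellGamma (x i / x j) p q * ellGamma (x j / x i) p q) else 1

/-- The trigonometric Cauchy kernel `K(x,y)`. -/
def cauchyK {n : ℕ} (q t : ℂ) (x y : Fin n → ℂ) : ℂ :=
  ∏ i, ∏ j, qPochInf (t * x i / y j) q / qPochInf (x i / y j) q

/-- The trigonometric weight function `w(y)`. -/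
def wTrig {n : ℕ} (q t : ℂ) (y : Fin n → ℂ) : ℂ :=
  ∏ i, ∏ j, if i < j then
    (1 - y j / y i) * qPochInf (q * y j / (t * y i)) q / qPochInf (t * y j / y i) q else 1

/-- The elliptic Cauchy kernel `K(x,y;p)`. -/
def cauchyKell {n : ℕ} (p q t : ℂ) (x y : Fin n → ℂ) : ℂ :=
  ∏ i, ∏ j, ellGamma (x i / y j) p q / ellGamma (t * x i / y j) p q

/-- The elliptic weight function `w(y;p)`. -/
def wEll {n : ℕ} (p q t : ℂ) (y : Fin n → ℂ) : ℂ :=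
  ∏ i, ∏ j, if i < j then
    thetaF (y j / y i) p * ellGamma (t * y j / y i) p q /
      ellGamma (q * y j / (t * y i)) p q else 1

/-- `λ_{j+1}` with the convention `λ_{n+1} = 0`. -/
def lamNext {n : ℕ} (lam : Fin (n + 1) → ℕ) (j : Fin (n + 1)) : ℕ :=
  if h : (j : ℕ) + 1 < n + 1 then lam ⟨(j : ℕ) + 1, h⟩ else 0

/-- The constant `b_λ` in the Cauchy expansion. -/
def bLamC {n : ℕ} (q t : ℂ) (lam : Fin (n + 1) → ℕ) : ℂ :=
  ∏ i : Fin (n + 1), ∏ j : Fin (n + 1), if i ≤ j then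
    qPochFin (t ^ ((j : ℕ) - (i : ℕ) + 1) * q ^ ((lam i : ℤ) - (lam j : ℤ))) q
        (lam j - lamNext lam j) /
      qPochFin (t ^ ((j : ℕ) - (i : ℕ)) * q ^ ((lam i : ℤ) - (lam j : ℤ) + 1)) q
        (lam j - lamNext lam j)
  else 1

/-- The coefficient `𝒜_I(x;p)` of the generating series of elliptic Ruijsenaars
operators, in the form `t^{binom(|I|,2)} ∏_{i∈I,j∉I} θ(t x_i/x_j;p)/θ(x_i/x_j;p)`. -/
def AcoefD {n : ℕ} (p t : ℂ) (I : Finset (Fin n)) (x : Fin n → ℂ) : ℂ :=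
  t ^ (I.card.choose 2) *
    ∏ i ∈ I, ∏ j ∈ Iᶜ, thetaF (t * x i / x j) p / thetaF (x i / x j) p

/-- The coefficient `𝒜_I(x;p) = t^{⟨ε_I,ρ⟩} B_I(x;p)`. -/
def AcoefB {n : ℕ} (p t : ℂ) (I : Finset (Fin n)) (x : Fin n → ℂ) : ℂ :=
  (∏ i ∈ I, t ^ (n - 1 - (i : ℕ))) * Bcoef p t I x

/-- The gamma-factor `∏_{i<j} Γ(t x_j/x_i;p,q)/Γ(q x_j/(t x_i);p,q)` in `z` coordinates. -/
def Gfac {n : ℕ} (q t : ℂ) (z : Fin (n + 1) → ℂ) : ℂ :=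
  ∏ i, ∏ j, if i < j then
    ellGamma (t * ratZ z i j) (∏ k, z k) q / ellGamma (q * ratZ z i j / t) (∏ k, z k) q
  else 1

/-- The polynomial `d_λ(u) = ∏_{j=1}^n (1 - u t^{n-j} q^{λ_j})`. -/
def dPoly {n : ℕ} (q t : ℂ) (lam : Fin n → ℤ) : Polynomial ℂ :=
  ∏ j : Fin n, (1 - Polynomial.C (specVec q t lam j) * Polynomial.X)

/-- Rotation of affine exponents: `(rotF ν) j = ν (j+1)`. -/
def rotF {n : ℕ} (ν : Fin (n + 1) →₀ ℕ) : Fin (n + 1) →₀ ℕ :=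
  Finsupp.equivMapDomain (Equiv.subRight (1 : Fin (n + 1))) ν

/-- The domain `𝒰_θ : |pq/t| θ^{-n+1} < |x_j/x_i| < |t/(pq)| θ^{n-1}` (multiplicative form). -/
def UDom (n : ℕ) (q t : ℂ) (θ : ℝ) (p : ℂ) (x : Fin (n + 1) → ℂ) : Prop :=
  (∀ i, x i ≠ 0) ∧ ∀ i j : Fin (n + 1), i < j →
    ‖p * q‖ < ‖x j / x i‖ * ‖t‖ * θ ^ n ∧
      ‖x j / x i‖ * ‖p * q‖ < ‖t‖ * θ ^ n


lemma qzpow_inj_aux {q : ℂ} (hq0 : q ≠ 0) (hq1 : ‖q‖ < 1)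
    {m : ℤ} (hm : 0 < m) (h : q ^ m = 1) : False := by
  have h2 : (q : ℂ) ^ m.toNat = 1 := by
    rw [← zpow_natCast, Int.toNat_of_nonneg (by omega)]; exact h
  have h3 : ‖q‖ ^ m.toNat = 1 := by
    rw [← norm_pow, h2, norm_one]
  have hpos : 0 < ‖q‖ := norm_pos_iff.mpr hq0
  have h4 : ‖q‖ ^ m.toNat < 1 := by
    apply pow_lt_one₀ (le_of_lt hpos) hq1
    omega
  rw [h3] at h4
  exact lt_irrefl 1 h4

lemma qzpow_inj {q : ℂ} (hq0 : q ≠ 0) (hq1 : ‖q‖ < 1)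
    {a b : ℤ} (h : q ^ a = q ^ b) : a = b := by
  by_contra hne
  have h1 : q ^ (a - b) = 1 := by
    rw [zpow_sub₀ hq0, h, div_self (zpow_ne_zero _ hq0)]
  rcases lt_trichotomy a b with hlt | heq | hgt
  · have h1' : q ^ (b - a) = 1 := by
      rw [zpow_sub₀ hq0, ← h, div_self (zpow_ne_zero _ hq0)]
    exact qzpow_inj_aux hq0 hq1 (by omega) h1'
  · exact hne heq
  · exact qzpow_inj_aux hq0 hq1 (by omega) h1

lemma spec_lt_aux {n : ℕ} {q t : ℂ} (hq0 : q ≠ 0) (ht : t ≠ 0)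
    (hk : ∀ k ∈ Finset.Icc 1 (n - 1), ∀ l : ℤ, t ^ k ≠ q ^ l)
    {i j : Fin n} (hij : (i : ℕ) < (j : ℕ)) {a b : ℤ}
    (h : t ^ (n - 1 - (i : ℕ)) * q ^ a = t ^ (n - 1 - (j : ℕ)) * q ^ b) : False := by
  have hjn : (j : ℕ) ≤ n - 1 := by have := j.isLt; omega
  have hsplit : n - 1 - (i : ℕ) = (n - 1 - (j : ℕ)) + ((j : ℕ) - (i : ℕ)) := by omega
  rw [hsplit, pow_add, mul_assoc] at h
  have h2 := mul_left_cancel₀ (pow_ne_zero (n - 1 - (j : ℕ)) ht) h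
  have h3 : t ^ ((j : ℕ) - (i : ℕ)) = q ^ (b - a) := by
    rw [zpow_sub₀ hq0, eq_div_iff (zpow_ne_zero a hq0)]
    exact h2
  exact hk _ (Finset.mem_Icc.mpr ⟨by omega, by omega⟩) (b - a) h3

lemma spec_eq_aux {n : ℕ} {q t : ℂ} (hq0 : q ≠ 0) (hq1 : ‖q‖ < 1) (ht : t ≠ 0)
    (hk : ∀ k ∈ Finset.Icc 1 (n - 1), ∀ l : ℤ, t ^ k ≠ q ^ l)
    (i j : Fin n) (a b : ℤ)
    (h : t ^ (n - 1 - (i : ℕ)) * q ^ a = t ^ (n - 1 - (j : ℕ)) * q ^ b) :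
    i = j ∧ a = b := by
  rcases lt_trichotomy (i : ℕ) (j : ℕ) with hlt | heq | hgt
  · exact absurd h (fun hh => spec_lt_aux hq0 ht hk hlt hh)
  · have hij : i = j := Fin.ext heq
    subst hij
    have h2 := mul_left_cancel₀ (pow_ne_zero (n - 1 - (i : ℕ)) ht) h
    exact ⟨rfl, qzpow_inj hq0 hq1 h2⟩
  · exact absurd h.symm (fun hh => spec_lt_aux hq0 ht hk hgt hh)

/-- Lemma 4.1 (1): the polynomials `d_λ(u)` separate `ℤ^n`
if and only if `t^k ∉ q^ℤ` for `k = 1,…,n-1`. -/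
theorem statement9 (n : ℕ) (hn : 2 ≤ n) (q t : ℂ) (hq0 : q ≠ 0)
    (hq1 : ‖q‖ < 1) (ht : t ≠ 0) :
    (∀ lam mu : Fin n → ℤ, lam ≠ mu → dPoly q t lam ≠ dPoly q t mu) ↔
      (∀ k ∈ Finset.Icc 1 (n - 1), ∀ l : ℤ, t ^ k ≠ q ^ l) := by
  constructor
  · -- separation implies no relation
    intro hsep k hmem l htl
    simp only [Finset.mem_Icc] at hmem
    have hkn : k < n := by omega
    have h0n : 0 < n := by omega
    set kF : Fin n := ⟨k, hkn⟩ with hkF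
    set zF : Fin n := ⟨0, h0n⟩ with hzF
    have hkv : (kF : ℕ) = k := rfl
    have hzv : (zF : ℕ) = 0 := rfl
    have hzk : zF ≠ kF := by
      intro h
      have : (0 : ℕ) = k := congrArg Fin.val h
      omega
    set lam : Fin n → ℤ := fun j => if j = kF then l + 1 else 0 with hlam
    set mu : Fin n → ℤ := fun j => if j = zF then 1 else if j = kF then l else 0 with hmu
    have hne : lam ≠ mu := by
      intro h
      have h0 := congrFun h zF
      simp only [hlam, hmu, if_pos rfl, if_neg hzk] at h0
      exact absurd h0 (by norm_num)
    apply hsep lam mu hne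
    unfold dPoly
    apply Fintype.prod_equiv (Equiv.swap zF kF)
    intro j
    have hspec : specVec q t lam j = specVec q t mu (Equiv.swap zF kF j) := by
      rcases eq_or_ne j zF with rfl | hj0
      · rw [Equiv.swap_apply_left]
        simp only [specVec, hlam, hmu, if_neg hzk, if_neg (Ne.symm hzk), eq_self_iff_true, if_true]
        rw [← htl, zpow_zero, mul_one, ← pow_add]
        congr 1
        omega
      · rcases eq_or_ne j kF with rfl | hjk
        · rw [Equiv.swap_apply_right]
          simp only [specVec, hlam, hmu, eq_self_iff_true, if_true]
          have h1 : (q : ℂ) ^ (l + 1 : ℤ) = q ^ l * q := by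
            rw [zpow_add₀ hq0, zpow_one]
          have h2 : n - 1 - (kF : ℕ) + k = n - 1 - (zF : ℕ) := by
            rw [hkv, hzv]
            omega
          rw [h1, ← htl, ← mul_assoc, ← pow_add, h2, zpow_one]
        · rw [Equiv.swap_apply_of_ne_of_ne hj0 hjk]
          simp only [specVec, hlam, hmu, if_neg hjk, if_neg hj0]
    rw [hspec]
  · -- no relation implies separation
    intro hk lam mu hlm heq
    apply hlm
    funext j
    have hcj : specVec q t mu j ≠ 0 :=
      mul_ne_zero (pow_ne_zero _ ht) (zpow_ne_zero _ hq0)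
    have hev : Polynomial.eval (specVec q t mu j)⁻¹ (dPoly q t mu) = 0 := by
      unfold dPoly
      rw [Polynomial.eval_prod]
      apply Finset.prod_eq_zero (Finset.mem_univ j)
      simp [mul_inv_cancel₀ hcj]
    have hev2 : Polynomial.eval (specVec q t mu j)⁻¹ (dPoly q t lam) = 0 := by
      rw [heq]; exact hev
    unfold dPoly at hev2
    rw [Polynomial.eval_prod, Finset.prod_eq_zero_iff] at hev2
    obtain ⟨i, -, hi⟩ := hev2
    simp only [Polynomial.eval_sub, Polynomial.eval_one, Polynomial.eval_mul,
      Polynomial.eval_C, Polynomial.eval_X] at hi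
    have h1 : specVec q t lam i * (specVec q t mu j)⁻¹ = 1 := (sub_eq_zero.mp hi).symm
    have h2 : specVec q t lam i = specVec q t mu j := (mul_inv_eq_one₀ hcj).mp h1
    have h3 := spec_eq_aux hq0 hq1 ht hk i j (lam i) (mu j) (by simpa [specVec] using h2)
    obtain ⟨rfl, hab⟩ := h3
    exact hab
end
end

section
/- Let n ≥ 2, q ∈ ℂ with 0 < |q| < 1 and t ∈ ℂ*, and for λ ∈ ℤ^n define d_λ(u) = ∏_{j=1}^n (1 − u t^{n−j} q^{λ_j}) ∈ ℂ[u]. Then the polynomials d_λ(u) separate the set P_+ of dominant vectors (vectors λ ∈ ℤ^n with λ_1 ≥ ⋯ ≥ λ_n) if and only if t^k ∉ q^{ℤ_{<0}} for k = 1,…,n−1. -/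
open scoped BigOperators Classical
open MeasureTheory

noncomputable section

open Polynomial in
lemma aux_prod_linear_eq_multiset {n : ℕ} (c c' : Fin n → ℂ)
    (hc : ∀ j, c j ≠ 0) (hc' : ∀ j, c' j ≠ 0)
    (h : ∏ j : Fin n, (1 - C (c j) * X) = ∏ j : Fin n, (1 - C (c' j) * X)) :
    Multiset.map c Finset.univ.val = Multiset.map c' Finset.univ.val := by
  have key : ∀ (c : Fin n → ℂ), (∀ j, c j ≠ 0) →
      (∏ j : Fin n, ((1 : ℂ[X]) - C (c j) * X)).roots
        = Multiset.map (fun j => (c j)⁻¹) Finset.univ.val := by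
    intro c hc
    have hfac : ∀ j, (1 : ℂ[X]) - C (c j) * X = C (-c j) * (X - C (c j)⁻¹) := by
      intro j
      have h1 : C (c j) * C (c j)⁻¹ = 1 := by
        rw [← C_mul, mul_inv_cancel₀ (hc j), C_1]
      rw [map_neg]
      linear_combination -h1
    have hne : ∀ j, (1 : ℂ[X]) - C (c j) * X ≠ 0 := by
      intro j
      rw [hfac j]
      exact mul_ne_zero (by simpa using hc j) (X_sub_C_ne_zero _)
    rw [Polynomial.roots_prod _ _ (Finset.prod_ne_zero_iff.mpr fun j _ => hne j)]
    have hroots : ∀ j : Fin n, ((1 : ℂ[X]) - C (c j) * X).roots = {(c j)⁻¹} := by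
      intro j
      rw [hfac j, roots_C_mul _ (by simpa using hc j), roots_X_sub_C]
    calc (Finset.univ.val.bind fun j => ((1 : ℂ[X]) - C (c j) * X).roots)
        = Finset.univ.val.bind fun j => ({(c j)⁻¹} : Multiset ℂ) :=
          Multiset.bind_congr fun j _ => hroots j
      _ = Multiset.map (fun j => (c j)⁻¹) Finset.univ.val := Multiset.bind_singleton _ _
  have h2 : Multiset.map (fun j => (c j)⁻¹) Finset.univ.val
      = Multiset.map (fun j => (c' j)⁻¹) Finset.univ.val := by
    rw [← key c hc, ← key c' hc', h]
  have h3 := congrArg (Multiset.map (fun z : ℂ => z⁻¹)) h2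
  simpa [Multiset.map_map, Function.comp_def] using h3

lemma aux_zpow_inj {q : ℂ} (hq0 : q ≠ 0) (hq1 : ‖q‖ < 1) :
    Function.Injective fun a : ℤ => q ^ a := by
  have key : ∀ a b : ℤ, a < b → q ^ a ≠ q ^ b := by
    intro a b hab h
    have h1 : q ^ (b - a) = 1 := by
      rw [zpow_sub₀ hq0, ← h, div_self (zpow_ne_zero _ hq0)]
    have hcz : ((b - a).toNat : ℤ) = b - a := Int.toNat_of_nonneg (by omega)
    have h2 : q ^ (b - a).toNat = 1 := by
      rw [← zpow_natCast, hcz, h1]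
    have habs : ‖q‖ ^ (b - a).toNat = 1 := by
      rw [← norm_pow, h2, norm_one]
    have hclt : ‖q‖ ^ (b - a).toNat < 1 :=
      pow_lt_one₀ (norm_nonneg q) hq1 (by omega)
    linarith
  intro a b h
  by_contra hne
  rcases lt_or_gt_of_ne hne with h' | h'
  · exact key a b h' h
  · exact key b a h' h.symm

lemma aux_antitone_eq {n : ℕ} (f g : Fin n → ℤ)
    (hf : ∀ i j : Fin n, i ≤ j → f j ≤ f i) (hg : ∀ i j : Fin n, i ≤ j → g j ≤ g i)
    (h : Multiset.map f Finset.univ.val = Multiset.map g Finset.univ.val) : f = g := by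
  rw [Fin.univ_val_map, Fin.univ_val_map, Multiset.coe_eq_coe] at h
  haveI : Std.Antisymm (fun a b : ℤ => b ≤ a) := ⟨fun a b h1 h2 => le_antisymm h2 h1⟩
  have hsf : List.Pairwise (fun a b : ℤ => b ≤ a) (List.ofFn f) :=
    List.pairwise_ofFn.mpr fun i j hij => hf i j (le_of_lt hij)
  have hsg : List.Pairwise (fun a b : ℤ => b ≤ a) (List.ofFn g) :=
    List.pairwise_ofFn.mpr fun i j hij => hg i j (le_of_lt hij)
  exact List.ofFn_inj.mp (List.Perm.eq_of_pairwise' hsf hsg h)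

/-- Lemma 4.1 (2): the polynomials `d_λ(u)` separate the set of
dominant vectors if and only if `t^k ∉ q^{ℤ_{<0}}` for `k = 1,…,n-1`. -/
theorem statement10 (n : ℕ) (hn : 2 ≤ n) (q t : ℂ) (hq0 : q ≠ 0)
    (hq1 : ‖q‖ < 1) (ht : t ≠ 0) :
    (∀ lam mu : Fin n → ℤ, DomVec lam → DomVec mu → lam ≠ mu →
        dPoly q t lam ≠ dPoly q t mu) ↔
      (∀ k ∈ Finset.Icc 1 (n - 1), ∀ l : ℤ, l < 0 → t ^ k ≠ q ^ l) := by
  constructor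
  · -- separation → no bad relation
    intro hsep k hk l hl heq
    obtain ⟨hk1, hk2⟩ := Finset.mem_Icc.mp hk
    have hkl : k < n := by omega
    set lam : Fin n → ℤ := fun i => if k + 1 ≤ (i : ℕ) then l else 0 with hlam
    set mu : Fin n → ℤ := fun i => if (i : ℕ) = 0 then -l else if k ≤ (i : ℕ) then l else 0
      with hmu
    have hdl : DomVec lam := by
      intro i j hij
      have hij' : (i : ℕ) ≤ (j : ℕ) := hij
      simp only [hlam]
      split_ifs <;> omega
    have hdm : DomVec mu := by
      intro i j hij
      have hij' : (i : ℕ) ≤ (j : ℕ) := hij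
      simp only [hmu]
      split_ifs <;> omega
    have hne : lam ≠ mu := by
      intro h
      have h0 := congrFun h ⟨0, by omega⟩
      simp only [hlam, hmu] at h0
      norm_num at h0
      omega
    apply hsep lam mu hdl hdm hne
    -- dPoly lam = dPoly mu
    set i0 : Fin n := ⟨0, by omega⟩ with hi0
    set ik : Fin n := ⟨k, hkl⟩ with hik
    have hi0v : (i0 : ℕ) = 0 := rfl
    have hikv : (ik : ℕ) = k := rfl
    set σ : Equiv.Perm (Fin n) := Equiv.swap i0 ik with hσ
    have hspec : ∀ i, specVec q t mu i = specVec q t lam (σ i) := by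
      intro i
      have hqinv : q ^ (-l) = (t ^ k)⁻¹ := by rw [heq, zpow_neg]
      have hpows : t ^ (n - 1) = t ^ (n - 1 - k) * t ^ k :=
        (pow_sub_mul_pow t (show k ≤ n - 1 by omega)).symm
      by_cases h0 : i = i0
      · subst h0
        have hσ0 : σ i0 = ik := Equiv.swap_apply_left _ _
        rw [hσ0]
        show t ^ (n - 1 - (i0 : ℕ)) * q ^ mu i0 = t ^ (n - 1 - (ik : ℕ)) * q ^ lam ik
        have e1 : mu i0 = -l := by simp [hmu, hi0v]
        have e2 : lam ik = 0 := by
          simp only [hlam, hikv]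
          split_ifs <;> omega
        rw [e1, e2, hi0v, hikv, zpow_zero, mul_one, Nat.sub_zero, hqinv, hpows]
        field_simp
      · by_cases hkk : i = ik
        · subst hkk
          have hσk : σ ik = i0 := Equiv.swap_apply_right _ _
          rw [hσk]
          show t ^ (n - 1 - (ik : ℕ)) * q ^ mu ik = t ^ (n - 1 - (i0 : ℕ)) * q ^ lam i0
          have e1 : mu ik = l := by
            simp only [hmu, hikv]
            split_ifs <;> omega
          have e2 : lam i0 = 0 := by
            simp only [hlam, hi0v]
            split_ifs <;> omega
          rw [e1, e2, hi0v, hikv, zpow_zero, mul_one, Nat.sub_zero, ← heq, hpows]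
        · have hσi : σ i = i := Equiv.swap_apply_of_ne_of_ne h0 hkk
          rw [hσi]
          have hv0 : (i : ℕ) ≠ 0 := by
            intro h
            exact h0 (Fin.ext (by rw [h, hi0v]))
          have hvk : (i : ℕ) ≠ k := by
            intro h
            exact hkk (Fin.ext (by rw [h, hikv]))
          have e : mu i = lam i := by
            simp only [hmu, hlam]
            split_ifs <;> omega
          show t ^ (n - 1 - (i : ℕ)) * q ^ mu i = t ^ (n - 1 - (i : ℕ)) * q ^ lam i
          rw [e]
    show dPoly q t lam = dPoly q t mu
    unfold dPoly
    rw [show (∏ j : Fin n, (1 - Polynomial.C (specVec q t mu j) * Polynomial.X))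
        = ∏ j : Fin n, (1 - Polynomial.C (specVec q t lam (σ j)) * Polynomial.X) from
      Finset.prod_congr rfl fun j _ => by rw [hspec j]]
    exact (Equiv.prod_comp σ fun i => 1 - Polynomial.C (specVec q t lam i) * Polynomial.X).symm
  · -- no bad relation → separation
    intro hyp lam mu hdl hdm hne hdeq
    apply hne
    have hcl : ∀ (ν : Fin n → ℤ) (j : Fin n), specVec q t ν j ≠ 0 := fun ν j =>
      mul_ne_zero (pow_ne_zero _ ht) (zpow_ne_zero _ hq0)
    have M : Multiset.map (specVec q t lam) Finset.univ.val
        = Multiset.map (specVec q t mu) Finset.univ.val :=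
      aux_prod_linear_eq_multiset _ _ (hcl lam) (hcl mu) hdeq
    by_cases hrel : ∃ k, 1 ≤ k ∧ k ≤ n - 1 ∧ ∃ m : ℤ, t ^ k = q ^ m
    · obtain ⟨k, hk1, hk2, m, hkm⟩ := hrel
      have hm0 : 0 ≤ m := by
        by_contra hm
        exact hyp k (Finset.mem_Icc.mpr ⟨hk1, hk2⟩) m (by omega) hkm
      have hpt : ∀ (ν : Fin n → ℤ) (j : Fin n),
          specVec q t ν j ^ k = q ^ (m * ((n - 1 - (j : ℕ) : ℕ) : ℤ) + (k : ℤ) * ν j) := by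
        intro ν j
        have e1 : (t ^ (n - 1 - (j : ℕ))) ^ k
            = q ^ (m * ((n - 1 - (j : ℕ) : ℕ) : ℤ)) := by
          rw [← pow_mul, mul_comm (n - 1 - (j : ℕ)) k, pow_mul, hkm,
            ← zpow_natCast (q ^ m), ← zpow_mul]
        have e2 : (q ^ ν j) ^ k = q ^ ((k : ℤ) * ν j) := by
          rw [← zpow_natCast (q ^ ν j), ← zpow_mul, mul_comm]
        show (t ^ (n - 1 - (j : ℕ)) * q ^ ν j) ^ k = _
        rw [mul_pow, e1, e2, ← zpow_add₀ hq0]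
      set hh : (Fin n → ℤ) → Fin n → ℤ :=
        fun ν j => m * ((n - 1 - (j : ℕ) : ℕ) : ℤ) + (k : ℤ) * ν j with hhh
      have M2 : Multiset.map (hh lam) Finset.univ.val
          = Multiset.map (hh mu) Finset.univ.val := by
        apply Multiset.map_injective (aux_zpow_inj hq0 hq1)
        rw [Multiset.map_map, Multiset.map_map]
        have c1 : ((fun a : ℤ => q ^ a) ∘ hh lam)
            = ((fun z : ℂ => z ^ k) ∘ specVec q t lam) := by
          funext j
          exact (hpt lam j).symm
        have c2 : ((fun a : ℤ => q ^ a) ∘ hh mu)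
            = ((fun z : ℂ => z ^ k) ∘ specVec q t mu) := by
          funext j
          exact (hpt mu j).symm
        rw [c1, c2, ← Multiset.map_map, ← Multiset.map_map, M]
      have hant : ∀ (ν : Fin n → ℤ), DomVec ν →
          ∀ i j : Fin n, i ≤ j → hh ν j ≤ hh ν i := by
        intro ν hdv i j hij
        have hij' : (i : ℕ) ≤ (j : ℕ) := hij
        have h1 : ((n - 1 - (j : ℕ) : ℕ) : ℤ) ≤ ((n - 1 - (i : ℕ) : ℕ) : ℤ) := by omega
        have h2 : (k : ℤ) * ν j ≤ (k : ℤ) * ν i :=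
          mul_le_mul_of_nonneg_left (hdv i j hij) (by positivity)
        have h3 := mul_le_mul_of_nonneg_left h1 hm0
        simp only [hhh]
        linarith
      have heq2 := aux_antitone_eq _ _ (hant lam hdl) (hant mu hdm) M2
      funext j
      have hj := congrFun heq2 j
      simp only [hhh] at hj
      have hk0 : (k : ℤ) ≠ 0 := by
        exact_mod_cast (by omega : k ≠ 0)
      exact mul_left_cancel₀ hk0 (add_left_cancel hj)
    · push_neg at hrel
      have key : ∀ (i j : Fin n) (a b : ℤ), (i : ℕ) ≤ (j : ℕ) →
          t ^ (n - 1 - (i : ℕ)) * q ^ a = t ^ (n - 1 - (j : ℕ)) * q ^ b →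
          i = j ∧ a = b := by
        intro i j a b hij hEq
        have hi : (i : ℕ) < n := i.isLt
        have hj : (j : ℕ) < n := j.isLt
        have hsplit : n - 1 - (i : ℕ) = ((j : ℕ) - (i : ℕ)) + (n - 1 - (j : ℕ)) := by omega
        rw [hsplit, pow_add, mul_comm (t ^ ((j : ℕ) - (i : ℕ))), mul_assoc] at hEq
        have hEq2 : t ^ ((j : ℕ) - (i : ℕ)) * q ^ a = q ^ b :=
          mul_left_cancel₀ (pow_ne_zero _ ht) hEq
        by_cases hij2 : (i : ℕ) = (j : ℕ)
        · refine ⟨Fin.ext hij2, ?_⟩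
          rw [hij2] at hEq2
          simp only [Nat.sub_self, pow_zero, one_mul] at hEq2
          exact aux_zpow_inj hq0 hq1 hEq2
        · exfalso
          have hrel2 : t ^ ((j : ℕ) - (i : ℕ)) = q ^ (b - a) := by
            rw [zpow_sub₀ hq0, eq_div_iff (zpow_ne_zero _ hq0)]
            exact hEq2
          exact hrel _ (by omega) (by omega) _ hrel2
      have hE : Function.Injective
          (fun p : Fin n × ℤ => t ^ (n - 1 - (p.1 : ℕ)) * q ^ p.2) := by
        rintro ⟨i, a⟩ ⟨j, b⟩ hEq
        simp only at hEq
        rcases le_total (i : ℕ) (j : ℕ) with hle | hle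
        · obtain ⟨h1, h2⟩ := key i j a b hle hEq
          rw [h1, h2]
        · obtain ⟨h1, h2⟩ := key j i b a hle hEq.symm
          rw [h1, h2]
      have M2 : Multiset.map (fun j => (j, lam j)) Finset.univ.val
          = Multiset.map (fun j => (j, mu j)) Finset.univ.val := by
        apply Multiset.map_injective hE
        rw [Multiset.map_map, Multiset.map_map]
        unfold specVec at M
        simpa [Function.comp_def, specVec] using M
      funext j
      have hmem : (j, lam j) ∈ Multiset.map (fun j => (j, mu j)) Finset.univ.val := by
        rw [← M2]
        exact Multiset.mem_map_of_mem _ (Finset.mem_univ j)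
      obtain ⟨i, _, hpair⟩ := Multiset.mem_map.mp hmem
      obtain ⟨h1, h2⟩ := Prod.mk.injEq _ _ _ _ ▸ hpair
      rw [← h2, h1]
end
end

section
/- Let q ∈ ℂ with 0 < |q| < 1 and suppose s = (s_1,…,s_n) ∈ (ℂ*)^n satisfies s_j/s_i ∉ q^{ℤ∖{0}} for 1 ≤ i < j ≤ n. Then there exists a countable set S ⊆ ℂ* such that, for every c ∈ ℂ* ∖ S, one has ∏_{j=1}^n (1 − c s_j q^{m_j}) ≠ ∏_{j=1}^n (1 − c s_j) for every nonzero m = (m_1,…,m_n) ∈ ℤ^n. -/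
open scoped BigOperators Classical
open MeasureTheory

noncomputable section

/-- Lemma 4.3: under the condition `s_j/s_i ∉ q^{ℤ∖{0}}`, there is a
countable set `S ⊆ ℂ*` such that for `c ∈ ℂ* ∖ S` one has
`∏_j (1 - c s_j q^{m_j}) ≠ ∏_j (1 - c s_j)` for every nonzero `m ∈ ℤ^n`. -/
theorem statement12 (n : ℕ) (q : ℂ) (hq0 : q ≠ 0) (hq1 : ‖q‖ < 1)
    (s : Fin n → ℂ) (hs : ∀ i, s i ≠ 0)
    (hsep : ∀ i j : Fin n, i < j → ∀ l : ℤ, l ≠ 0 → s j / s i ≠ q ^ l) :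
    ∃ S : Set ℂ, S.Countable ∧ (∀ a ∈ S, a ≠ 0) ∧
      ∀ c : ℂ, c ≠ 0 → c ∉ S → ∀ m : Fin n → ℤ, m ≠ 0 →
        (∏ j, (1 - c * s j * q ^ m j)) ≠ ∏ j, (1 - c * s j) := by
    classical
  set P : (Fin n → ℤ) → Polynomial ℂ :=
    fun m => ∏ j, (1 - Polynomial.C (s j * q ^ m j) * Polynomial.X) with hPdef
  have hqone : ∀ l : ℤ, q ^ l = 1 → l = 0 := by
    intro l hl
    have habs : ‖q‖ ^ l = 1 := by
      have := congrArg norm hl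
      rwa [norm_zpow, norm_one] at this
    exact (zpow_eq_one_iff_right₀ (norm_nonneg q) (ne_of_lt hq1)).mp habs
  have heval : ∀ (m : Fin n → ℤ) (c : ℂ),
      Polynomial.eval c (P m) = ∏ j, (1 - c * s j * q ^ m j) := by
    intro m c
    rw [hPdef]
    rw [Polynomial.eval_prod]
    refine Finset.prod_congr rfl fun j _ => ?_
    simp; ring
  have hne : ∀ s' : Fin n → ℂ, (∀ i, s' i ≠ 0) →
      ∀ j, s j ≠ 0 := fun _ _ => hs
  -- key: membership forces m j0 = 0
  have hmem : ∀ (j0 k : Fin n) (l : ℤ), s k = s j0 * q ^ l → l = 0 := by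
    intro j0 k l hk
    rcases lt_trichotomy j0 k with h | h | h
    · by_contra hl
      refine hsep j0 k h l hl ?_
      rw [hk, mul_comm, mul_div_assoc, div_self (hs j0), mul_one]
    · apply hqone
      have : s j0 * q ^ l = s j0 * 1 := by rw [mul_one, ← hk, h]
      exact mul_left_cancel₀ (hs j0) this
    · by_contra hl
      refine hsep k j0 h (-l) (neg_ne_zero.mpr hl) ?_
      rw [hk, zpow_neg, div_mul_cancel_left₀ (hs j0)]
  have key : ∀ m : Fin n → ℤ, m ≠ 0 → P m - P 0 ≠ 0 := by
    intro m hm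
    obtain ⟨j0, hj0⟩ : ∃ j, m j ≠ 0 := by
      by_contra h; push_neg at h; exact hm (funext h)
    have ha : s j0 * q ^ m j0 ≠ 0 := mul_ne_zero (hs j0) (zpow_ne_zero _ hq0)
    set c0 : ℂ := (s j0 * q ^ m j0)⁻¹ with hc0def
    intro hcontra
    have h1 : Polynomial.eval c0 (P m) = 0 := by
      rw [heval]
      apply Finset.prod_eq_zero (Finset.mem_univ j0)
      rw [hc0def]
      field_simp
      rw [div_self (hs j0), sub_self]
    have h2 : Polynomial.eval c0 (P 0) ≠ 0 := by
      rw [heval]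
      apply Finset.prod_ne_zero_iff.mpr
      intro k _
      intro hk0
      simp only [Pi.zero_apply, zpow_zero, mul_one] at hk0
      have hk : s k = s j0 * q ^ m j0 := by
        have : c0 * s k = 1 := by linear_combination -hk0
        rw [hc0def] at this
        field_simp at this
        rw [← this]; field_simp [hs j0]
      exact hj0 (hmem j0 k (m j0) hk)
    have : Polynomial.eval c0 (P m - P 0) = Polynomial.eval c0 (0 : Polynomial ℂ) := by
      rw [hcontra]
    rw [Polynomial.eval_sub, Polynomial.eval_zero, h1, zero_sub, neg_eq_zero] at this
    exact h2 this
  refine ⟨{c : ℂ | c ≠ 0 ∧ ∃ m : Fin n → ℤ, m ≠ 0 ∧ Polynomial.eval c (P m - P 0) = 0},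
    ?_, fun a ha => ha.1, ?_⟩
  · have hsub : {c : ℂ | c ≠ 0 ∧ ∃ m : Fin n → ℤ, m ≠ 0 ∧ Polynomial.eval c (P m - P 0) = 0}
        ⊆ ⋃ m : Fin n → ℤ, ⋃ _ : m ≠ 0, {c : ℂ | (P m - P 0).IsRoot c} := by
      rintro c ⟨-, m, hm, hc⟩
      exact Set.mem_iUnion.mpr ⟨m, Set.mem_iUnion.mpr ⟨hm, hc⟩⟩
    refine Set.Countable.mono hsub ?_
    refine Set.countable_iUnion fun m => Set.countable_iUnion fun hm => ?_
    exact (Polynomial.finite_setOf_isRoot (key m hm)).countable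
  · intro c hc hcS m hm hprod
    apply hcS
    refine ⟨hc, m, hm, ?_⟩
    rw [Polynomial.eval_sub, heval, heval, sub_eq_zero]
    rw [hprod]
    refine Finset.prod_congr rfl fun j _ => ?_
    simp
end
end

section
/- Let n ≥ 1, s ∈ (ℂ*)^n, u ∈ ℂ, q ∈ ℂ with 0 < |q| < 1, and r ∈ (0,1), M_r > 0. Suppose the complex numbers b^I_β, indexed by subsets I ⊆ {1,…,n} and elements β of Q^af_+, satisfy the Cauchy estimate |b^I_β| ≤ M_r / r^{ht(β)}. Define b_β(ξ;u) = Σ_{I⊆{1,…,n}} (−u)^{|I|} b^I_β (∏_{i∈I} s_i ξ_i) for ξ = (ξ_1,…,ξ_n) ∈ (ℂ*)^n. Then for every β ∈ Q^af_+ with β > 0 and every ν ∈ Q^af_+: |b_β(q^{−ν};u)| ≤ (M_r / (r^{ht(β)} |q|^{d(ν)})) ∏_{j=1}^n (1 + |u| |s_j|), where q^{−ν} = (q^{−⟨ε_1,ν⟩}, …, q^{−⟨ε_n,ν⟩}). -/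
open scoped BigOperators Classical
open MeasureTheory

noncomputable section

lemma zpow_sum_aux {α : Type*} (s : Finset α) (a : ℝ) (ha : a ≠ 0) (f : α → ℤ) :
    ∏ i ∈ s, a ^ f i = a ^ (∑ i ∈ s, f i) := by
  induction s using Finset.induction with
  | empty => simp
  | insert x s h ih => rw [Finset.prod_insert h, Finset.sum_insert h, zpow_add₀ ha, ih]



/-- Lemma 5.3: the Cauchy estimate for the symbols
`b_β(q^{-ν};u)` of the modified elliptic Ruijsenaars operators. -/
theorem statement14 (n : ℕ) (s : Fin (n + 1) → ℂ) (u q : ℂ) (hq0 : q ≠ 0)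
    (hq1 : ‖q‖ < 1) (r M : ℝ) (hr0 : 0 < r) (hr1 : r < 1) (hM : 0 < M)
    (b : Finset (Fin (n + 1)) → (Fin (n + 1) → ℕ) → ℂ)
    (hb : ∀ (I : Finset (Fin (n + 1))) (β : Fin (n + 1) → ℕ),
      ‖b I β‖ ≤ M / r ^ (∑ j, β j))
    (β ν : Fin (n + 1) → ℕ) (hβ : β ≠ 0) :
    ‖∑ I ∈ Finset.univ.powerset,
        (-u) ^ I.card * b I β * ∏ i ∈ I, s i * q ^ (-pairEpsF ν i)‖ ≤
      M / (r ^ (∑ j, β j) * ‖q‖ ^ dIndF ν) *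
        ∏ j, (1 + ‖u‖ * ‖s j‖) := by
  have hq : 0 < ‖q‖ := by simpa using hq0
  set h : ℕ := ∑ j, β j with hh
  set d : ℕ := dIndF ν with hd
  set C : ℝ := M / (r ^ h * ‖q‖ ^ d) with hC
  have hC0 : 0 ≤ C := by positivity
  -- per-term bound
  have key : ∀ I ∈ (Finset.univ : Finset (Fin (n + 1))).powerset,
      ‖(-u) ^ I.card * b I β * ∏ i ∈ I, s i * q ^ (-pairEpsF ν i)‖ ≤
        C * ∏ i ∈ I, (‖u‖ * ‖s i‖) := by
    intro I _
    rw [norm_mul, norm_mul, norm_pow, norm_neg, norm_prod]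
    have habs : ∀ i ∈ I, ‖s i * q ^ (-pairEpsF ν i)‖ =
        ‖s i‖ * ‖q‖ ^ (-pairEpsF ν i) := by
      intro i _; rw [norm_mul, norm_zpow]
    rw [Finset.prod_congr rfl habs, Finset.prod_mul_distrib,
      zpow_sum_aux I (‖q‖) hq.ne' (fun i => -pairEpsF ν i)]
    have hsum : ∑ i ∈ I, -pairEpsF ν i ≥ -(d : ℤ) := by
      have h1 : ∑ i ∈ I, pairEpsF ν i ≤ ∑ i ∈ I, ((pairEpsF ν i).toNat : ℤ) :=
        Finset.sum_le_sum fun i _ => Int.self_le_toNat _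
      have h2 : ∑ i ∈ I, ((pairEpsF ν i).toNat : ℤ) ≤
          ∑ i : Fin (n + 1), ((pairEpsF ν i).toNat : ℤ) :=
        Finset.sum_le_sum_of_subset_of_nonneg (Finset.subset_univ I)
          (fun i _ _ => Int.natCast_nonneg _)
      have h3 : (∑ i : Fin (n + 1), ((pairEpsF ν i).toNat : ℤ)) = (d : ℤ) := by
        rw [hd, dIndF]; push_cast; rfl
      rw [Finset.sum_neg_distrib]
      omega
    have hzq : ‖q‖ ^ (∑ i ∈ I, -pairEpsF ν i) ≤ ‖q‖ ^ (-(d : ℤ)) := by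
      have hc : (1 : ℝ) ≤ (‖q‖)⁻¹ := (one_le_inv₀ hq).mpr hq1.le
      have := zpow_le_zpow_right₀ hc (neg_le_neg hsum)
      simpa [zpow_neg, inv_zpow, inv_inv] using this
    have hu : ‖u‖ ^ I.card = ∏ i ∈ I, ‖u‖ := by
      rw [Finset.prod_const]
    have hbnd : ‖b I β‖ * ‖q‖ ^ (∑ i ∈ I, -pairEpsF ν i) ≤ C := by
      calc ‖b I β‖ * ‖q‖ ^ (∑ i ∈ I, -pairEpsF ν i)
          ≤ (M / r ^ h) * ‖q‖ ^ (-(d : ℤ)) := by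
            apply mul_le_mul (hb I β) hzq (by positivity) (by positivity)
        _ = C := by
            rw [hC, zpow_neg, zpow_natCast]; field_simp
    calc ‖u‖ ^ I.card * ‖b I β‖ *
          ((∏ i ∈ I, ‖s i‖) * ‖q‖ ^ (∑ i ∈ I, -pairEpsF ν i))
        = (‖b I β‖ * ‖q‖ ^ (∑ i ∈ I, -pairEpsF ν i)) *
          (‖u‖ ^ I.card * ∏ i ∈ I, ‖s i‖) := by ring
      _ ≤ C * (‖u‖ ^ I.card * ∏ i ∈ I, ‖s i‖) := by
          apply mul_le_mul_of_nonneg_right hbnd (by positivity)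
      _ = C * ∏ i ∈ I, (‖u‖ * ‖s i‖) := by
          rw [hu, ← Finset.prod_mul_distrib]
  calc ‖∑ I ∈ Finset.univ.powerset,
        (-u) ^ I.card * b I β * ∏ i ∈ I, s i * q ^ (-pairEpsF ν i)‖
      ≤ ∑ I ∈ Finset.univ.powerset,
          ‖(-u) ^ I.card * b I β * ∏ i ∈ I, s i * q ^ (-pairEpsF ν i)‖ :=
        norm_sum_le _ _
    _ ≤ ∑ I ∈ (Finset.univ : Finset (Fin (n + 1))).powerset,
          C * ∏ i ∈ I, (‖u‖ * ‖s i‖) := Finset.sum_le_sum key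
    _ = C * ∏ j, (1 + ‖u‖ * ‖s j‖) := by
        rw [← Finset.mul_sum]
        congr 1
        have hp := Finset.prod_add (fun j => ‖u‖ * ‖s j‖)
          (fun _ => (1 : ℝ)) (Finset.univ : Finset (Fin (n + 1)))
        simp only [Finset.prod_const_one, mul_one] at hp
        rw [show (fun j => 1 + ‖u‖ * ‖s j‖) =
          (fun j => ‖u‖ * ‖s j‖ + 1) from funext fun j => add_comm _ _, hp]
end
end
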